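/- Let F : M_n(ℂ) → M_m(ℂ) be a UCP map, ρ ∈ M_m(ℂ) a density matrix with ω = tr(ρ·), σ ∈ M_n(ℂ) the density matrix of ξ := ω∘F, Q the support projection of σ, F† the Hilbert–Schmidt adjoint of F, and G^R : M_m(ℂ) → M_n(ℂ) a unital linear map with tr(ρ·F(B)·A) = tr(σ·B·G^R(A)) for all A, B. If the equivalent conditions hold (e.g., F(σ·QBQ)·ρ = ρ·F(QBQ·σ) for all B ∈ M_n(ℂ)), then for all A ∈ M_m(ℂ): Q·G^R(A)·Q = g(σ)·F†(√ρ·A·√ρ)·g(σ), where √ρ is the positive semidefinite square root of ρ and g(σ) is obtained by applying to σ, via the functional calculus for Hermitian matrices, the function g with g(x) = x^{-1/2} for x > 0 and g(0) = 0 (i.e., g(σ) is the square root of the Moore–Penrose pseudoinverse of σ). -/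

import Mathlib

open Matrix ComplexOrder

/-- The `k`-th amplification `id_{M_k(ℂ)} ⊗ Φ` of a map `Φ` between matrix algebras. -/
def amplify {n m : Type*} (Φ : Matrix n n ℂ → Matrix m m ℂ) (k : ℕ)
    (M : Matrix (Fin k × n) (Fin k × n) ℂ) : Matrix (Fin k × m) (Fin k × m) ℂ :=
  Matrix.of fun p q => Φ (Matrix.of fun a b => M (p.1, a) (q.1, b)) p.2 q.2

/-- Complete positivity: all amplifications preserve positive semidefiniteness. -/
def IsCP {n m : Type*} [Fintype n] [Fintype m] (Φ : Matrix n n ℂ → Matrix m m ℂ) : Prop :=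
  ∀ (k : ℕ) (M : Matrix (Fin k × n) (Fin k × n) ℂ), M.PosSemidef → (amplify Φ k M).PosSemidef

/-- `P` is the support projection of `σ`: the orthogonal projection (Hermitian idempotent)
whose range equals the range of `σ`. -/
def IsSupportProj {n : Type*} [Fintype n] [DecidableEq n] (P σ : Matrix n n ℂ) : Prop :=
  P.IsHermitian ∧ P * P = P ∧ LinearMap.range P.mulVecLin = LinearMap.range σ.mulVecLin


/-- The positive semidefinite square root of a positive semidefinite matrix
(the definition `Matrix.PosSemidef.sqrt` of the older Mathlib, since removed). -/
noncomputable def Matrix.PosSemidef.sqrt {n : Type*} [Fintype n] [DecidableEq n] {𝕜 : Type*}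
    [RCLike 𝕜] {A : Matrix n n 𝕜} (hA : A.PosSemidef) : Matrix n n 𝕜 :=
  (hA.1.eigenvectorUnitary : Matrix n n 𝕜) *
    diagonal (fun i => ((Real.sqrt (hA.1.eigenvalues i) : ℝ) : 𝕜)) *
  (star hA.1.eigenvectorUnitary : Matrix n n 𝕜)

namespace Stmt16Aux


variable {k : ℕ}

lemma eq_zero_of_trace_mul_eq_zero (X : Matrix (Fin k) (Fin k) ℂ)
    (h : ∀ B, (X * B).trace = 0) : X = 0 := by
  have h0 := h Xᴴ
  have hX : (X * Xᴴ).trace = ((∑ i, ∑ j, Complex.normSq (X i j) : ℝ) : ℂ) := by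
    rw [Matrix.trace]
    push_cast
    refine Finset.sum_congr rfl fun i _ => ?_
    rw [Matrix.diag_apply, Matrix.mul_apply]
    refine Finset.sum_congr rfl fun j _ => ?_
    rw [Matrix.conjTranspose_apply, RCLike.star_def, Complex.mul_conj]
  rw [hX] at h0
  have hr : (∑ i, ∑ j, Complex.normSq (X i j)) = 0 := by exact_mod_cast h0
  ext i j
  have hi := (Finset.sum_eq_zero_iff_of_nonneg
    (fun i _ => Finset.sum_nonneg fun j _ => Complex.normSq_nonneg _)).mp hr i (Finset.mem_univ i)
  have hj := (Finset.sum_eq_zero_iff_of_nonneg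
    (fun j _ => Complex.normSq_nonneg _)).mp hi j (Finset.mem_univ j)
  simpa using Complex.normSq_eq_zero.mp hj

lemma mulVec_ext {X Y : Matrix (Fin k) (Fin k) ℂ}
    (h : ∀ v, X.mulVec v = Y.mulVec v) : X = Y := by
  ext i j
  have := congrFun (h (Pi.single j 1)) i
  simpa [Matrix.mulVec_single] using this

lemma proj_eq {P₁ P₂ : Matrix (Fin k) (Fin k) ℂ}
    (h₁ : P₁.IsHermitian) (h₂ : P₂.IsHermitian)
    (i₁ : P₁ * P₁ = P₁) (i₂ : P₂ * P₂ = P₂)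
    (hr : LinearMap.range P₁.mulVecLin = LinearMap.range P₂.mulVecLin) : P₁ = P₂ := by
  have key : ∀ (Pa Pb : Matrix (Fin k) (Fin k) ℂ), Pa * Pa = Pa →
      LinearMap.range Pb.mulVecLin ≤ LinearMap.range Pa.mulVecLin → Pa * Pb = Pb := by
    intro Pa Pb ha hle
    apply mulVec_ext
    intro v
    obtain ⟨w, hw⟩ := hle ⟨v, rfl⟩
    simp only [Matrix.mulVecLin_apply] at hw
    rw [← Matrix.mulVec_mulVec, ← hw, Matrix.mulVec_mulVec, ha, hw]
  have e1 : P₂ * P₁ = P₁ := key P₂ P₁ i₂ hr.le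
  have e2 : P₁ * P₂ = P₂ := key P₁ P₂ i₁ hr.ge
  calc P₁ = P₁ᴴ := h₁.symm
    _ = (P₂ * P₁)ᴴ := by rw [e1]
    _ = P₁ᴴ * P₂ᴴ := by rw [Matrix.conjTranspose_mul]
    _ = P₁ * P₂ := by rw [h₁.eq, h₂.eq]
    _ = P₂ := e2



variable {n m : Type*} [Fintype n] [Fintype m] [DecidableEq n]

lemma IsCP.pos {Φ : Matrix n n ℂ → Matrix m m ℂ} (h : IsCP Φ)
    {X : Matrix n n ℂ} (hX : X.PosSemidef) : (Φ X).PosSemidef := by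
  have hM : (X.submatrix (Prod.snd : Fin 1 × n → n) Prod.snd).PosSemidef :=
    hX.submatrix _
  have hN := h 1 _ hM
  have : Φ X = (amplify Φ 1 (X.submatrix Prod.snd Prod.snd)).submatrix
      (fun i : m => ((0 : Fin 1), i)) (fun j : m => ((0 : Fin 1), j)) := by
    ext i j
    rfl
  rw [this]
  exact hN.submatrix _

lemma posMap_isHermitian {Φ : Matrix n n ℂ →ₗ[ℂ] Matrix m m ℂ}
    (h : ∀ X : Matrix n n ℂ, X.PosSemidef → (Φ X).PosSemidef)
    {H : Matrix n n ℂ} (hH : H.IsHermitian) : (Φ H).IsHermitian := by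
  have hpsd : ∀ f : ℝ → ℝ, (∀ x, 0 ≤ f x) → (hH.cfc f).PosSemidef := by
    intro f hf
    have hd : (Matrix.diagonal (RCLike.ofReal ∘ f ∘ hH.eigenvalues) :
        Matrix n n ℂ).PosSemidef := by
      refine Matrix.posSemidef_diagonal_iff.mpr fun i => ?_
      rw [Function.comp_apply, Function.comp_apply, RCLike.nonneg_iff]
      simp [hf _]
    have := hd.mul_mul_conjTranspose_same (hH.eigenvectorUnitary : Matrix n n ℂ)
    simpa [Matrix.IsHermitian.cfc, Matrix.star_eq_conjTranspose] using this
  have hdiag : (Matrix.diagonal (RCLike.ofReal ∘ (fun x => max x 0) ∘ hH.eigenvalues) -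
      Matrix.diagonal (RCLike.ofReal ∘ (fun x => max (-x) 0) ∘ hH.eigenvalues) :
      Matrix n n ℂ) = Matrix.diagonal (RCLike.ofReal ∘ hH.eigenvalues) := by
    rw [Matrix.diagonal_sub]
    refine congrArg Matrix.diagonal ?_
    funext i
    simp only [Pi.sub_apply, Function.comp_apply]
    rw [← RCLike.ofReal_sub, max_zero_sub_max_neg_zero_eq_self]
  have hdecomp : H = hH.cfc (fun x => max x 0) - hH.cfc (fun x => max (-x) 0) := by
    rw [Matrix.IsHermitian.cfc, Matrix.IsHermitian.cfc,
      ← map_sub, hdiag]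
    exact hH.spectral_theorem
  have h1 := (h _ (hpsd (fun x => max x 0) fun x => le_max_right _ _)).isHermitian
  have h2 := (h _ (hpsd (fun x => max (-x) 0) fun x => le_max_right _ _)).isHermitian
  rw [hdecomp, map_sub]
  exact h1.sub h2

lemma posMap_conjTranspose {Φ : Matrix n n ℂ →ₗ[ℂ] Matrix m m ℂ}
    (h : ∀ X : Matrix n n ℂ, X.PosSemidef → (Φ X).PosSemidef)
    (C : Matrix n n ℂ) : Φ Cᴴ = (Φ C)ᴴ := by
  set H1 : Matrix n n ℂ := C + Cᴴ with hH1
  set H2 : Matrix n n ℂ := Complex.I • (C - Cᴴ) with hH2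
  have hH1h : H1.IsHermitian := by
    rw [Matrix.IsHermitian, hH1, Matrix.conjTranspose_add, Matrix.conjTranspose_conjTranspose,
      add_comm]
  have hH2h : H2.IsHermitian := by
    rw [Matrix.IsHermitian, hH2, Matrix.conjTranspose_smul, Matrix.conjTranspose_sub,
      Matrix.conjTranspose_conjTranspose]
    rw [Complex.star_def, Complex.conj_I, neg_smul, ← smul_neg, neg_sub]
  have hIH2 : Complex.I • H2 = -(C - Cᴴ) := by
    rw [hH2, smul_smul, Complex.I_mul_I, neg_one_smul]
  have hC : C = (2⁻¹ : ℂ) • (H1 - Complex.I • H2) := by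
    rw [hIH2, hH1]
    module
  have hCH : Cᴴ = (2⁻¹ : ℂ) • (H1 + Complex.I • H2) := by
    rw [hIH2, hH1]
    module
  have e1 := posMap_isHermitian h hH1h
  have e2 := posMap_isHermitian h hH2h
  rw [hCH, hC]
  simp only [LinearMap.map_smul, map_add, map_sub]
  rw [Matrix.conjTranspose_smul, Matrix.conjTranspose_sub, Matrix.conjTranspose_smul,
    e1.eq, e2.eq]
  rw [show star (2⁻¹ : ℂ) = (2⁻¹ : ℂ) by norm_num,
    show star Complex.I = -Complex.I from Complex.conj_I]
  module

lemma diagonal_mul_sbm (d : n → ℂ) (a b : n) (c : ℂ) :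
    Matrix.diagonal d * Matrix.single a b c = Matrix.single a b (d a * c) := by
  ext i j
  rw [Matrix.diagonal_mul]
  by_cases hi : a = i
  · subst hi
    by_cases hj : b = j
    · subst hj; simp [Matrix.single_apply_same]
    · simp [Matrix.single, hj]
  · simp [Matrix.single, hi]

lemma sbm_mul_diagonal (d : n → ℂ) (a b : n) (c : ℂ) :
    Matrix.single a b c * Matrix.diagonal d = Matrix.single a b (c * d b) := by
  ext i j
  rw [Matrix.mul_diagonal]
  by_cases hi : a = i
  · subst hi
    by_cases hj : b = j
    · subst hj; simp [Matrix.single_apply_same]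
    · simp [Matrix.single, hj]
  · simp [Matrix.single, hi]

lemma scalar_key {μa μb li lj : ℝ} (hμa : 0 < μa) (hμb : 0 < μb)
    (hli : 0 ≤ li) (hlj : 0 ≤ lj) (z : ℂ)
    (h : (μa : ℂ) * (z * (lj : ℂ)) = (μb : ℂ) * ((li : ℂ) * z)) :
    (li : ℂ) * z =
      ((Real.sqrt μa : ℂ) * ((μb ^ (-(1 : ℝ) / 2) : ℝ) : ℂ)) *
        ((Real.sqrt li : ℂ) * z * (Real.sqrt lj : ℂ)) := by
  rcases eq_or_ne z 0 with rfl | hz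
  · simp
  · have h' : ((μa * lj : ℝ) : ℂ) * z = ((μb * li : ℝ) : ℂ) * z := by
      push_cast
      ring_nf
      ring_nf at h
      linear_combination h
    have hr : μa * lj = μb * li := by
      have := mul_right_cancel₀ hz h'
      exact_mod_cast this
    have hsq : Real.sqrt μa * Real.sqrt lj = Real.sqrt μb * Real.sqrt li := by
      rw [← Real.sqrt_mul hμa.le, ← Real.sqrt_mul hμb.le, hr]
    have hrpow : μb ^ (-(1 : ℝ) / 2) = (Real.sqrt μb)⁻¹ := by
      rw [show (-(1 : ℝ) / 2) = -(1 / 2 : ℝ) by norm_num, Real.rpow_neg hμb.le,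
        ← Real.sqrt_eq_rpow]
    have hre : Real.sqrt μa * μb ^ (-(1 : ℝ) / 2) * (Real.sqrt li * Real.sqrt lj) = li := by
      have hμb0 : Real.sqrt μb ≠ 0 := (Real.sqrt_pos.mpr hμb).ne'
      have h2 : Real.sqrt μa * Real.sqrt li * Real.sqrt lj = li * Real.sqrt μb := by
        calc Real.sqrt μa * Real.sqrt li * Real.sqrt lj
            = Real.sqrt li * (Real.sqrt μa * Real.sqrt lj) := by ring
          _ = Real.sqrt li * (Real.sqrt μb * Real.sqrt li) := by rw [hsq]
          _ = (Real.sqrt li * Real.sqrt li) * Real.sqrt μb := by ring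
          _ = li * Real.sqrt μb := by rw [Real.mul_self_sqrt hli]
      rw [hrpow]
      field_simp
      linear_combination h2
    calc (li : ℂ) * z
        = ((Real.sqrt μa * μb ^ (-(1 : ℝ) / 2) * (Real.sqrt li * Real.sqrt lj) : ℝ) : ℂ) * z := by
          rw [hre]
      _ = _ := by push_cast; ring


set_option maxHeartbeats 1000000 in
theorem core {n m : ℕ}
    (F : Matrix (Fin n) (Fin n) ℂ →ₗ[ℂ] Matrix (Fin m) (Fin m) ℂ)
    (hFstar : ∀ C, F Cᴴ = (F C)ᴴ)
    (ρ sρ : Matrix (Fin m) (Fin m) ℂ) (σ Q gs sq : Matrix (Fin n) (Fin n) ℂ)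
    (U Ds Dq Dg Dr : Matrix (Fin n) (Fin n) ℂ) (μ : Fin n → ℝ)
    (W Eρ Er : Matrix (Fin m) (Fin m) ℂ) (ν : Fin m → ℝ)
    (hμ0 : ∀ i, 0 ≤ μ i) (hν0 : ∀ i, 0 ≤ ν i)
    (hU1 : U * Uᴴ = 1) (hU2 : Uᴴ * U = 1)
    (hW1 : W * Wᴴ = 1) (hW2 : Wᴴ * W = 1)
    (hDs : Ds = Matrix.diagonal fun i => ((μ i : ℝ) : ℂ))
    (hDq : Dq = Matrix.diagonal fun i => if 0 < μ i then (1 : ℂ) else 0)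
    (hDg : Dg = Matrix.diagonal fun i =>
      ((if 0 < μ i then (μ i) ^ (-(1 : ℝ) / 2) else 0 : ℝ) : ℂ))
    (hDr : Dr = Matrix.diagonal fun i => ((Real.sqrt (μ i) : ℝ) : ℂ))
    (hEρ : Eρ = Matrix.diagonal fun i => ((ν i : ℝ) : ℂ))
    (hEr : Er = Matrix.diagonal fun i => ((Real.sqrt (ν i) : ℝ) : ℂ))
    (hσspec : σ = U * Ds * Uᴴ)
    (hgsspec : gs = U * Dg * Uᴴ) (hsqspec : sq = U * Dr * Uᴴ)
    (hρspec : ρ = W * Eρ * Wᴴ) (hsρspec : sρ = W * Er * Wᴴ)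
    (hQh : Q.IsHermitian) (hQidem : Q * Q = Q)
    (hQrange : LinearMap.range Q.mulVecLin = LinearMap.range σ.mulVecLin)
    (Fd : Matrix (Fin m) (Fin m) ℂ →ₗ[ℂ] Matrix (Fin n) (Fin n) ℂ)
    (hFd : ∀ (A : Matrix (Fin m) (Fin m) ℂ) (B : Matrix (Fin n) (Fin n) ℂ),
      ((F B)ᴴ * A).trace = (Bᴴ * Fd A).trace)
    (Gright : Matrix (Fin m) (Fin m) ℂ →ₗ[ℂ] Matrix (Fin n) (Fin n) ℂ)
    (hGR : ∀ (A : Matrix (Fin m) (Fin m) ℂ) (B : Matrix (Fin n) (Fin n) ℂ),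
      (ρ * F B * A).trace = (σ * B * Gright A).trace)
    (hAC : ∀ B : Matrix (Fin n) (Fin n) ℂ,
      F (σ * (Q * B * Q)) * ρ = ρ * F ((Q * B * Q) * σ))
    (A : Matrix (Fin m) (Fin m) ℂ) :
    Q * Gright A * Q = gs * Fd (sρ * A * sρ) * gs := by
  -- cancellation helpers
  have hUc : ∀ X : Matrix (Fin n) (Fin n) ℂ, Uᴴ * (U * X) = X := fun X => by
    rw [← Matrix.mul_assoc, hU2, Matrix.one_mul]
  have hWc : ∀ X : Matrix (Fin m) (Fin m) ℂ, Wᴴ * (W * X) = X := fun X => by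
    rw [← Matrix.mul_assoc, hW2, Matrix.one_mul]
  have hWc' : ∀ X : Matrix (Fin m) (Fin m) ℂ, W * (Wᴴ * X) = X := fun X => by
    rw [← Matrix.mul_assoc, hW1, Matrix.one_mul]
  have hconj : ∀ D D' : Matrix (Fin n) (Fin n) ℂ,
      (U * D * Uᴴ) * (U * D' * Uᴴ) = U * (D * D') * Uᴴ := fun D D' => by
    simp only [Matrix.mul_assoc, hUc]
  have hconjW : ∀ D D' : Matrix (Fin m) (Fin m) ℂ,
      (W * D * Wᴴ) * (W * D' * Wᴴ) = W * (D * D') * Wᴴ := fun D D' => by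
    simp only [Matrix.mul_assoc, hWc]
  -- diagonal identities
  have hzero : ∀ i, ¬ 0 < μ i → μ i = 0 := fun i h => le_antisymm (not_lt.mp h) (hμ0 i)
  have hdQS : Dq * Ds = Ds := by
    rw [hDq, hDs, Matrix.diagonal_mul_diagonal]
    refine congrArg Matrix.diagonal (funext fun i => ?_)
    by_cases h : 0 < μ i
    · simp [h]
    · simp [h, hzero i h]
  have hdSQ : Ds * Dq = Ds := by
    rw [hDq, hDs, Matrix.diagonal_mul_diagonal]
    refine congrArg Matrix.diagonal (funext fun i => ?_)
    by_cases h : 0 < μ i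
    · simp [h]
    · simp [h, hzero i h]
  have hdQQ : Dq * Dq = Dq := by
    rw [hDq, Matrix.diagonal_mul_diagonal]
    refine congrArg Matrix.diagonal (funext fun i => ?_)
    by_cases h : 0 < μ i <;> simp [h]
  have hdGS : Dg * Ds = Dr := by
    rw [hDg, hDs, hDr, Matrix.diagonal_mul_diagonal]
    refine congrArg Matrix.diagonal (funext fun i => ?_)
    by_cases h : 0 < μ i
    · rw [if_pos h, ← Complex.ofReal_mul]
      congr 1
      have h1 : μ i ^ (-(1:ℝ)/2) * μ i = μ i ^ (-(1:ℝ)/2) * μ i ^ (1:ℝ) := by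
        rw [Real.rpow_one]
      rw [h1, ← Real.rpow_add h, show (-(1:ℝ)/2 + 1) = (1/2 : ℝ) by norm_num,
        Real.sqrt_eq_rpow]
    · simp [h, hzero i h]
  have hdSGG : Ds * (Dg * Dg) = Dq := by
    rw [hDg, hDs, hDq, Matrix.diagonal_mul_diagonal, Matrix.diagonal_mul_diagonal]
    refine congrArg Matrix.diagonal (funext fun i => ?_)
    by_cases h : 0 < μ i
    · rw [if_pos h, if_pos h, ← Complex.ofReal_mul, ← Complex.ofReal_mul]
      congr 1
      rw [← Real.rpow_add h, show (-(1:ℝ)/2 + -(1:ℝ)/2) = (-1 : ℝ) by norm_num,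
        Real.rpow_neg_one, mul_inv_cancel₀ h.ne']
    · simp [h, hzero i h]
  have hdGQ : Dg * Dq = Dg := by
    rw [hDg, hDq, Matrix.diagonal_mul_diagonal]
    refine congrArg Matrix.diagonal (funext fun i => ?_)
    by_cases h : 0 < μ i <;> simp [h]
  -- lifted identities
  have hQspec : Q = U * Dq * Uᴴ := by
    have hDqH : Dqᴴ = Dq := by
      rw [hDq, Matrix.diagonal_conjTranspose]
      refine congrArg Matrix.diagonal (funext fun i => ?_)
      by_cases h : 0 < μ i <;> simp [h]
    have hQcH : (U * Dq * Uᴴ).IsHermitian := by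
      rw [Matrix.IsHermitian, Matrix.conjTranspose_mul, Matrix.conjTranspose_mul,
        Matrix.conjTranspose_conjTranspose, hDqH, Matrix.mul_assoc]
    have hQcI : (U * Dq * Uᴴ) * (U * Dq * Uᴴ) = U * Dq * Uᴴ := by rw [hconj, hdQQ]
    have hQcσ : (U * Dq * Uᴴ) * σ = σ := by rw [hσspec, hconj, hdQS]
    have hσgg : σ * ((U * Dg * Uᴴ) * (U * Dg * Uᴴ)) = U * Dq * Uᴴ := by
      rw [hconj, hσspec, hconj, hdSGG]
    have hr1 : LinearMap.range σ.mulVecLin ≤ LinearMap.range (U * Dq * Uᴴ).mulVecLin := by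
      conv_lhs => rw [← hQcσ]
      rw [Matrix.mulVecLin_mul]
      exact LinearMap.range_comp_le_range _ _
    have hr2 : LinearMap.range (U * Dq * Uᴴ).mulVecLin ≤ LinearMap.range σ.mulVecLin := by
      conv_lhs => rw [← hσgg]
      rw [Matrix.mulVecLin_mul]
      exact LinearMap.range_comp_le_range _ _
    exact proj_eq hQh hQcH hQidem hQcI (hQrange.trans (le_antisymm hr1 hr2))
  have hQσ : Q * σ = σ := by rw [hQspec, hσspec, hconj, hdQS]
  have hσQ : σ * Q = σ := by rw [hQspec, hσspec, hconj, hdSQ]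
  have hgsσ : gs * σ = sq := by rw [hgsspec, hσspec, hsqspec, hconj, hdGS]
  have hσgg : σ * (gs * gs) = Q := by rw [hgsspec, hconj, hσspec, hconj, hdSGG, ← hQspec]
  have hgsQ : gs * Q = gs := by rw [hgsspec, hQspec, hconj, hdGQ]
  -- THE KEY IDENTITY
  have sandwich : ∀ (D D' B : Matrix (Fin n) (Fin n) ℂ),
      U * (D * (Uᴴ * B * U) * D') * Uᴴ = (U * D * Uᴴ) * B * (U * D' * Uᴴ) := by
    intro D D' B; simp only [Matrix.mul_assoc]
  have key : ∀ B, ρ * F (Q * B * Q) = sρ * F (sq * B * gs) * sρ := by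
    have hsbm : ∀ (a b : Fin n) (c : ℂ),
        Matrix.single a b c = c • Matrix.single a b (1 : ℂ) := fun a b c => by
      rw [Matrix.smul_single, smul_eq_mul, mul_one]
    have hbasis : ∀ a b : Fin n,
        ρ * F (U * (Dq * Matrix.single a b (1:ℂ) * Dq) * Uᴴ) =
          sρ * F (U * (Dr * Matrix.single a b (1:ℂ) * Dg) * Uᴴ) * sρ := by
      intro a b
      rw [hDq, hDg, hDr]
      simp only [diagonal_mul_sbm, sbm_mul_diagonal]
      by_cases ha : 0 < μ a
      · by_cases hb : 0 < μ b
        · -- main case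
          simp only [if_pos ha, if_pos hb, one_mul, mul_one]
          conv_rhs => rw [hsbm]
          simp only [Matrix.mul_smul, Matrix.smul_mul, _root_.map_smul]
          set B₀ : Matrix (Fin n) (Fin n) ℂ := U * Matrix.single a b (1:ℂ) * Uᴴ with hB₀
          set Y : Matrix (Fin m) (Fin m) ℂ := F B₀ with hY
          -- auxiliary facts about B₀
          have hQB : Q * B₀ * Q = B₀ := by
            rw [hB₀, hQspec, hconj, hconj, hDq, diagonal_mul_sbm, sbm_mul_diagonal,
              if_pos ha, if_pos hb, one_mul, mul_one]
          have hσB : σ * B₀ = ((μ a : ℝ) : ℂ) • B₀ := by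
            rw [hB₀, hσspec, hconj, hDs, diagonal_mul_sbm, mul_one, hsbm,
              Matrix.mul_smul, Matrix.smul_mul]
          have hBσ : B₀ * σ = ((μ b : ℝ) : ℂ) • B₀ := by
            rw [hB₀, hσspec, hconj, hDs, sbm_mul_diagonal, one_mul, hsbm,
              Matrix.mul_smul, Matrix.smul_mul]
          have hACs : ((μ a : ℝ) : ℂ) • (Y * ρ) = ((μ b : ℝ) : ℂ) • (ρ * Y) := by
            have h7 := hAC B₀
            rw [hQB, hσB, hBσ, _root_.map_smul, _root_.map_smul, Matrix.smul_mul, Matrix.mul_smul] at h7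
            exact h7
          -- transport to the eigenbasis of ρ
          set Z : Matrix (Fin m) (Fin m) ℂ := Wᴴ * Y * W with hZdef
          have hYZ : Y = W * Z * Wᴴ := by
            rw [hZdef]
            simp only [Matrix.mul_assoc, hW1, Matrix.mul_one, hWc']
          have hYρ : Y * ρ = W * (Z * Eρ) * Wᴴ := by rw [hYZ, hρspec, hconjW]
          have hρY : ρ * Y = W * (Eρ * Z) * Wᴴ := by rw [hYZ, hρspec, hconjW]
          have hent : ((μ a : ℝ) : ℂ) • (Z * Eρ) = ((μ b : ℝ) : ℂ) • (Eρ * Z) := by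
            rw [hYρ, hρY] at hACs
            have h9 := congrArg (fun X => Wᴴ * X * W) hACs
            simpa only [Matrix.smul_mul, Matrix.mul_smul, Matrix.mul_assoc, hW2,
              Matrix.mul_one, hWc] using h9
          have hdz : Eρ * Z = ((Real.sqrt (μ a) : ℂ) * ((μ b ^ (-(1:ℝ)/2) : ℝ) : ℂ)) •
              (Er * Z * Er) := by
            rw [hEρ] at hent
            rw [hEρ, hEr]
            ext i j
            have hij := congrFun (congrFun hent i) j
            simp only [Matrix.smul_apply, Matrix.mul_diagonal, Matrix.diagonal_mul,
              smul_eq_mul] at hij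
            simp only [Matrix.smul_apply, Matrix.mul_diagonal, Matrix.diagonal_mul,
              smul_eq_mul]
            exact scalar_key ha hb (hν0 i) (hν0 j) (Z i j) hij
          have hfin2 : sρ * Y * sρ = W * (Er * Z * Er) * Wᴴ := by
            rw [hYZ, hsρspec, hconjW, hconjW]
          rw [hρY, hfin2, hdz]
          simp only [Matrix.mul_smul, Matrix.smul_mul]
        · have h0 : μ b = 0 := hzero b hb
          simp [if_neg hb, h0, Matrix.single_zero, Matrix.mul_zero, Matrix.zero_mul,
            map_zero]
      · have h0 : μ a = 0 := hzero a ha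
        simp [if_neg ha, h0, Real.sqrt_zero, Matrix.single_zero, Matrix.mul_zero,
          Matrix.zero_mul, map_zero]
    -- package as linear maps and extend by linearity
    let φ₁ : Matrix (Fin n) (Fin n) ℂ →ₗ[ℂ] Matrix (Fin m) (Fin m) ℂ :=
      { toFun := fun C => ρ * F (U * (Dq * C * Dq) * Uᴴ)
        map_add' := fun C₁ C₂ => by
          simp only [Matrix.mul_add, Matrix.add_mul, map_add]
        map_smul' := fun c C => by
          simp only [Matrix.mul_smul, Matrix.smul_mul, _root_.map_smul, RingHom.id_apply] }
    let φ₂ : Matrix (Fin n) (Fin n) ℂ →ₗ[ℂ] Matrix (Fin m) (Fin m) ℂ :=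
      { toFun := fun C => sρ * F (U * (Dr * C * Dg) * Uᴴ) * sρ
        map_add' := fun C₁ C₂ => by
          simp only [Matrix.mul_add, Matrix.add_mul, map_add]
        map_smul' := fun c C => by
          simp only [Matrix.mul_smul, Matrix.smul_mul, _root_.map_smul, RingHom.id_apply] }
    have hφ : φ₁ = φ₂ := by
      apply Module.Basis.ext (Matrix.stdBasis ℂ (Fin n) (Fin n))
      rintro ⟨a, b⟩
      rw [Matrix.stdBasis_eq_single]
      exact hbasis a b
    intro B
    have h10 := LinearMap.congr_fun hφ (Uᴴ * B * U)
    simp only [φ₁, φ₂, LinearMap.coe_mk, AddHom.coe_mk] at h10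
    rw [sandwich, sandwich, ← hQspec, ← hsqspec, ← hgsspec] at h10
    exact h10
  -- determine both sides from traces against σ · B
  set X : Matrix (Fin m) (Fin m) ℂ := sρ * A * sρ with hX
  set M₁ : Matrix (Fin n) (Fin n) ℂ := Q * Gright A * Q with hM₁
  set M₂ : Matrix (Fin n) (Fin n) ℂ := gs * Fd X * gs with hM₂
  have htr : ∀ B, (σ * B * M₁).trace = (σ * B * M₂).trace := by
    intro B
    have hL : (σ * B * M₁).trace = (ρ * F (Q * B * Q) * A).trace := by
      rw [hM₁]
      have c1 : σ * B * (Q * Gright A * Q) = (σ * B * (Q * Gright A)) * Q := by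
        simp only [Matrix.mul_assoc]
      rw [c1, Matrix.trace_mul_comm]
      have c2 : Q * (σ * B * (Q * Gright A)) = σ * (Q * B * Q) * Gright A := by
        simp only [← Matrix.mul_assoc, hQσ, hσQ]
      rw [c2, ← hGR A (Q * B * Q)]
    have hR : (σ * B * M₂).trace = (ρ * F (Q * B * Q) * A).trace := by
      rw [hM₂]
      have c3 : σ * B * (gs * Fd X * gs) = (σ * B * (gs * Fd X)) * gs := by
        simp only [Matrix.mul_assoc]
      rw [c3, Matrix.trace_mul_comm]
      have c4 : gs * (σ * B * (gs * Fd X)) = (sq * B * gs) * Fd X := by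
        simp only [← Matrix.mul_assoc, hgsσ]
      rw [c4]
      have c5 : ((sq * B * gs) * Fd X).trace = (F (sq * B * gs) * X).trace := by
        have h6 := hFd X (sq * B * gs)ᴴ
        rw [Matrix.conjTranspose_conjTranspose, hFstar,
          Matrix.conjTranspose_conjTranspose] at h6
        exact h6.symm
      rw [c5, hX]
      have c6 : F (sq * B * gs) * (sρ * A * sρ) = (F (sq * B * gs) * sρ * A) * sρ := by
        simp only [Matrix.mul_assoc]
      rw [c6, Matrix.trace_mul_comm]
      have c7 : sρ * (F (sq * B * gs) * sρ * A) = sρ * F (sq * B * gs) * sρ * A := by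
        simp only [Matrix.mul_assoc]
      rw [c7, ← key B]
    rw [hL, hR]
  have hsub : M₁ * σ = M₂ * σ := by
    have h11 : (M₁ - M₂) * σ = 0 := by
      apply eq_zero_of_trace_mul_eq_zero
      intro B
      rw [Matrix.sub_mul, Matrix.sub_mul, Matrix.trace_sub,
        ← Matrix.trace_mul_cycle σ B M₁, ← Matrix.trace_mul_cycle σ B M₂, htr B, sub_self]
    rw [Matrix.sub_mul] at h11
    exact sub_eq_zero.mp h11
  have hM1f : M₁ * (σ * (gs * gs)) = M₁ := by
    rw [hσgg, hM₁, Matrix.mul_assoc (Q * Gright A) Q Q, hQidem]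
  have hM2f : M₂ * (σ * (gs * gs)) = M₂ := by
    rw [hσgg, hM₂, Matrix.mul_assoc (gs * Fd X) gs Q, hgsQ]
  calc M₁ = M₁ * (σ * (gs * gs)) := hM1f.symm
    _ = M₁ * σ * (gs * gs) := by rw [Matrix.mul_assoc M₁ σ (gs * gs)]
    _ = M₂ * σ * (gs * gs) := by rw [hsub]
    _ = M₂ * (σ * (gs * gs)) := by rw [Matrix.mul_assoc M₂ σ (gs * gs)]
    _ = M₂ := hM2f


end Stmt16Aux

/-- Under the equivalent conditions of the non-commutative Bayes theorem
(e.g. `F(σ·QBQ)·ρ = ρ·F(QBQ·σ)`), the compressed right Bayes map is given by the Petz-like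
formula `Q·G^R(A)·Q = g(σ)·F†(√ρ·A·√ρ)·g(σ)`, where `g(σ)` is obtained by applying
`g(x) = x^{-1/2}` (for `x > 0`, `g(0) = 0`) to `σ` via the functional calculus for
Hermitian matrices. -/
theorem stmt_16 (n m : ℕ)
    (F : Matrix (Fin n) (Fin n) ℂ →ₗ[ℂ] Matrix (Fin m) (Fin m) ℂ)
    (hFcp : IsCP (⇑F)) (hFunital : F 1 = 1)
    (ρ : Matrix (Fin m) (Fin m) ℂ) (hρ : ρ.PosSemidef) (hρtr : ρ.trace = 1)
    (σ : Matrix (Fin n) (Fin n) ℂ) (hσps : σ.PosSemidef) (hσtr : σ.trace = 1)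
    (hσ : ∀ B : Matrix (Fin n) (Fin n) ℂ, (σ * B).trace = (ρ * F B).trace)
    (Q : Matrix (Fin n) (Fin n) ℂ) (hQ : IsSupportProj Q σ)
    (Fd : Matrix (Fin m) (Fin m) ℂ →ₗ[ℂ] Matrix (Fin n) (Fin n) ℂ)
    (hFd : ∀ (A : Matrix (Fin m) (Fin m) ℂ) (B : Matrix (Fin n) (Fin n) ℂ),
      ((F B)ᴴ * A).trace = (Bᴴ * Fd A).trace)
    (Gright : Matrix (Fin m) (Fin m) ℂ →ₗ[ℂ] Matrix (Fin n) (Fin n) ℂ) (hGRu : Gright 1 = 1)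
    (hGR : ∀ (A : Matrix (Fin m) (Fin m) ℂ) (B : Matrix (Fin n) (Fin n) ℂ),
      (ρ * F B * A).trace = (σ * B * Gright A).trace)
    (hAC : ∀ B : Matrix (Fin n) (Fin n) ℂ,
      F (σ * (Q * B * Q)) * ρ = ρ * F ((Q * B * Q) * σ)) :
    ∀ A : Matrix (Fin m) (Fin m) ℂ,
      Q * Gright A * Q =
        (hσps.isHermitian.cfc fun x : ℝ => if 0 < x then x ^ (-(1 : ℝ) / 2) else 0) *
          Fd (hρ.sqrt * A * hρ.sqrt) *
        (hσps.isHermitian.cfc fun x : ℝ => if 0 < x then x ^ (-(1 : ℝ) / 2) else 0) := by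
  intro A
  obtain ⟨hQh, hQidem, hQrange⟩ := hQ
  have hFpos : ∀ X : Matrix (Fin n) (Fin n) ℂ, X.PosSemidef → (F X).PosSemidef :=
    fun X hX => Stmt16Aux.IsCP.pos hFcp hX
  exact Stmt16Aux.core F (Stmt16Aux.posMap_conjTranspose hFpos) ρ hρ.sqrt σ Q _ _
    (hσps.isHermitian.eigenvectorUnitary : Matrix (Fin n) (Fin n) ℂ) _ _ _ _
    hσps.isHermitian.eigenvalues
    (hρ.isHermitian.eigenvectorUnitary : Matrix (Fin m) (Fin m) ℂ) _ _
    hρ.isHermitian.eigenvalues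
    (fun i => hσps.eigenvalues_nonneg i) (fun i => hρ.eigenvalues_nonneg i)
    (Matrix.mem_unitaryGroup_iff.mp hσps.isHermitian.eigenvectorUnitary.2)
    (Matrix.mem_unitaryGroup_iff'.mp hσps.isHermitian.eigenvectorUnitary.2)
    (Matrix.mem_unitaryGroup_iff.mp hρ.isHermitian.eigenvectorUnitary.2)
    (Matrix.mem_unitaryGroup_iff'.mp hρ.isHermitian.eigenvectorUnitary.2)
    rfl rfl rfl rfl rfl rfl
    hσps.isHermitian.spectral_theorem rfl rfl
    hρ.isHermitian.spectral_theorem rfl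
    hQh hQidem hQrange Fd hFd Gright hGR hAC A
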